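/- The degree-14 polynomial 28431t¹⁴ − 589032t¹³ + 5435343t¹² − 29379024t¹¹ + 100757208t¹⁰ − 224163176t⁹ + 336260186t⁸ − 371473808t⁷ + 339968604t⁶ − 262478048t⁵ + 152856152t⁴ − 69550016t³ + 35706576t² − 17407872t + 3888000 has exactly two real roots, one in the interval (0.74, 0.75) and one in the interval (1.78, 1.80). -/

import Mathlib

set_option maxHeartbeats 1000000

/-- The degree-14 polynomial arising from the Gröbner basis computation for the
Einstein equations on `G₂/T` (normalized with `x₁ = x₅ = 1`, `x₄ = x₃`). -/
def P14 (t : ℝ) : ℝ :=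
  28431*t^14 - 589032*t^13 + 5435343*t^12 - 29379024*t^11 + 100757208*t^10
  - 224163176*t^9 + 336260186*t^8 - 371473808*t^7 + 339968604*t^6
  - 262478048*t^5 + 152856152*t^4 - 69550016*t^3 + 35706576*t^2
  - 17407872*t + 3888000

/-- Derivative of `P14`. -/
def P14' (t : ℝ) : ℝ :=
  398034*t^13 - 7657416*t^12 + 65224116*t^11 - 323169264*t^10 + 1007572080*t^9
  - 2017468584*t^8 + 2690081488*t^7 - 2600316656*t^6 + 2039811624*t^5
  - 1312390240*t^4 + 611424608*t^3 - 208650048*t^2 + 71413152*t - 17407872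

lemma hasDerivAt_P14 (x : ℝ) : HasDerivAt P14 (P14' x) x := by
  have H := (((((((((((((((hasDerivAt_pow 14 x).const_mul (28431:ℝ)).sub
    ((hasDerivAt_pow 13 x).const_mul (589032:ℝ))).add
    ((hasDerivAt_pow 12 x).const_mul (5435343:ℝ))).sub
    ((hasDerivAt_pow 11 x).const_mul (29379024:ℝ))).add
    ((hasDerivAt_pow 10 x).const_mul (100757208:ℝ))).sub
    ((hasDerivAt_pow 9 x).const_mul (224163176:ℝ))).add
    ((hasDerivAt_pow 8 x).const_mul (336260186:ℝ))).sub
    ((hasDerivAt_pow 7 x).const_mul (371473808:ℝ))).add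
    ((hasDerivAt_pow 6 x).const_mul (339968604:ℝ))).sub
    ((hasDerivAt_pow 5 x).const_mul (262478048:ℝ))).add
    ((hasDerivAt_pow 4 x).const_mul (152856152:ℝ))).sub
    ((hasDerivAt_pow 3 x).const_mul (69550016:ℝ))).add
    ((hasDerivAt_pow 2 x).const_mul (35706576:ℝ))).sub
    ((hasDerivAt_id x).const_mul (17407872:ℝ))).add_const (3888000:ℝ)
  have hP : P14 = fun t : ℝ =>
      28431*t^14 - 589032*t^13 + 5435343*t^12 - 29379024*t^11 + 100757208*t^10
      - 224163176*t^9 + 336260186*t^8 - 371473808*t^7 + 339968604*t^6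
      - 262478048*t^5 + 152856152*t^4 - 69550016*t^3 + 35706576*t^2
      - 17407872*t + 3888000 := rfl
  rw [hP]
  refine HasDerivAt.congr_deriv H ?_
  unfold P14'
  push_cast
  ring

lemma P14_cont : Continuous P14 := by unfold P14; fun_prop

lemma P14_pos_neg : ∀ t : ℝ, t ≤ 0 → 0 < P14 t := by
  intro t ht
  have h : (0:ℝ) ≤ -t := by linarith
  have key : P14 t = 28431*(-t)^14 + 589032*(-t)^13 + 5435343*(-t)^12
      + 29379024*(-t)^11 + 100757208*(-t)^10 + 224163176*(-t)^9 + 336260186*(-t)^8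
      + 371473808*(-t)^7 + 339968604*(-t)^6 + 262478048*(-t)^5 + 152856152*(-t)^4
      + 69550016*(-t)^3 + 35706576*(-t)^2 + 17407872*(-t) + 3888000 := by
    unfold P14; ring
  nlinarith [pow_nonneg h 14, pow_nonneg h 13, pow_nonneg h 12, pow_nonneg h 11,
    pow_nonneg h 10, pow_nonneg h 9, pow_nonneg h 8, pow_nonneg h 7, pow_nonneg h 6,
    pow_nonneg h 5, pow_nonneg h 4, pow_nonneg h 3, pow_nonneg h 2]


lemma P14_pos_A {t : ℝ} (h1 : (0:ℝ) ≤ t) (h2 : t ≤ ((37/50):ℝ)) : 0 < P14 t := by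
  have hta : (0:ℝ) ≤ t - 0 := by linarith
  have hbt : (0:ℝ) ≤ (37/50) - t := by linarith
  have key : (9012061295995008299689:ℝ) * (P14 t) = 2373046875000000000000000000000*((37/50) - t)^14 + 25360214062500000000000000000000*(t - 0)^1*((37/50) - t)^13 + 125669673082031250000000000000000*(t - 0)^2*((37/50) - t)^12 + 376526699638437500000000000000000*(t - 0)^3*((37/50) - t)^11 + 753172845918171093750000000000000*(t - 0)^4*((37/50) - t)^10 + 1052825497595078250000000000000000*(t - 0)^5*((37/50) - t)^9 + 1049477316833851243593750000000000*(t - 0)^6*((37/50) - t)^8 + 750031323979161985887500000000000*(t - 0)^7*((37/50) - t)^7 + 382778219252202610107906250000000*(t - 0)^8*((37/50) - t)^6 + 138471973509192832796015000000000*(t - 0)^9*((37/50) - t)^5 + 35569753818076371077766200000000*(t - 0)^10*((37/50) - t)^4 + 6693878413040032423967686000000*(t - 0)^11*((37/50) - t)^3 + 951277414496407896572948957500*(t - 0)^12*((37/50) - t)^2 + 82711367811012196996109629800*(t - 0)^13*((37/50) - t)^1 + 421593307343312564365130259*(t - 0)^14 := by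
    unfold P14; ring
  have hm1 : (0:ℝ) ≤ 25360214062500000000000000000000*(t - 0)^1*((37/50) - t)^13 := mul_nonneg (mul_nonneg (by norm_num) (pow_nonneg hta 1)) (pow_nonneg hbt 13)
  have hm2 : (0:ℝ) ≤ 125669673082031250000000000000000*(t - 0)^2*((37/50) - t)^12 := mul_nonneg (mul_nonneg (by norm_num) (pow_nonneg hta 2)) (pow_nonneg hbt 12)
  have hm3 : (0:ℝ) ≤ 376526699638437500000000000000000*(t - 0)^3*((37/50) - t)^11 := mul_nonneg (mul_nonneg (by norm_num) (pow_nonneg hta 3)) (pow_nonneg hbt 11)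
  have hm4 : (0:ℝ) ≤ 753172845918171093750000000000000*(t - 0)^4*((37/50) - t)^10 := mul_nonneg (mul_nonneg (by norm_num) (pow_nonneg hta 4)) (pow_nonneg hbt 10)
  have hm5 : (0:ℝ) ≤ 1052825497595078250000000000000000*(t - 0)^5*((37/50) - t)^9 := mul_nonneg (mul_nonneg (by norm_num) (pow_nonneg hta 5)) (pow_nonneg hbt 9)
  have hm6 : (0:ℝ) ≤ 1049477316833851243593750000000000*(t - 0)^6*((37/50) - t)^8 := mul_nonneg (mul_nonneg (by norm_num) (pow_nonneg hta 6)) (pow_nonneg hbt 8)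
  have hm7 : (0:ℝ) ≤ 750031323979161985887500000000000*(t - 0)^7*((37/50) - t)^7 := mul_nonneg (mul_nonneg (by norm_num) (pow_nonneg hta 7)) (pow_nonneg hbt 7)
  have hm8 : (0:ℝ) ≤ 382778219252202610107906250000000*(t - 0)^8*((37/50) - t)^6 := mul_nonneg (mul_nonneg (by norm_num) (pow_nonneg hta 8)) (pow_nonneg hbt 6)
  have hm9 : (0:ℝ) ≤ 138471973509192832796015000000000*(t - 0)^9*((37/50) - t)^5 := mul_nonneg (mul_nonneg (by norm_num) (pow_nonneg hta 9)) (pow_nonneg hbt 5)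
  have hm10 : (0:ℝ) ≤ 35569753818076371077766200000000*(t - 0)^10*((37/50) - t)^4 := mul_nonneg (mul_nonneg (by norm_num) (pow_nonneg hta 10)) (pow_nonneg hbt 4)
  have hm11 : (0:ℝ) ≤ 6693878413040032423967686000000*(t - 0)^11*((37/50) - t)^3 := mul_nonneg (mul_nonneg (by norm_num) (pow_nonneg hta 11)) (pow_nonneg hbt 3)
  have hm12 : (0:ℝ) ≤ 951277414496407896572948957500*(t - 0)^12*((37/50) - t)^2 := mul_nonneg (mul_nonneg (by norm_num) (pow_nonneg hta 12)) (pow_nonneg hbt 2)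
  have hm13 : (0:ℝ) ≤ 82711367811012196996109629800*(t - 0)^13*((37/50) - t)^1 := mul_nonneg (mul_nonneg (by norm_num) (pow_nonneg hta 13)) (pow_nonneg hbt 1)
  have hm0 : (0:ℝ) ≤ 2373046875000000000000000000000*((37/50) - t)^14 := mul_nonneg (by norm_num) (pow_nonneg hbt 14)
  have hmm : (0:ℝ) ≤ 421593307343312564365130259*(t - 0)^14 := mul_nonneg (by norm_num) (pow_nonneg hta 14)
  rcases le_total t ((37/100):ℝ) with hc | hc
  · have h' : ((37/100):ℝ) ≤ (37/50) - t := by linarith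
    have hp : ((9012061295995008299689/10000000000000000000000000000):ℝ) ≤ ((37/50) - t)^14 := by
      calc ((9012061295995008299689/10000000000000000000000000000):ℝ) = ((37/100):ℝ)^14 := by norm_num
        _ ≤ ((37/50) - t)^14 := pow_le_pow_left₀ (by norm_num) h' 14
    have h0' : (2373046875000000000000000000000:ℝ)*((9012061295995008299689/10000000000000000000000000000):ℝ) ≤ 2373046875000000000000000000000*((37/50) - t)^14 := mul_le_mul_of_nonneg_left hp (by norm_num)
    linarith [key, h0', hmm, hm1, hm2, hm3, hm4, hm5, hm6, hm7, hm8, hm9, hm10, hm11, hm12, hm13]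
  · have h' : ((37/100):ℝ) ≤ t - 0 := by linarith
    have hp : ((9012061295995008299689/10000000000000000000000000000):ℝ) ≤ (t - 0)^14 := by
      calc ((9012061295995008299689/10000000000000000000000000000):ℝ) = ((37/100):ℝ)^14 := by norm_num
        _ ≤ (t - 0)^14 := pow_le_pow_left₀ (by norm_num) h' 14
    have h0' : (421593307343312564365130259:ℝ)*((9012061295995008299689/10000000000000000000000000000):ℝ) ≤ 421593307343312564365130259*(t - 0)^14 := mul_le_mul_of_nonneg_left hp (by norm_num)
    linarith [key, h0', hm0, hm1, hm2, hm3, hm4, hm5, hm6, hm7, hm8, hm9, hm10, hm11, hm12, hm13]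

lemma P14'_neg_B {t : ℝ} (h1 : ((37/50):ℝ) ≤ t) (h2 : t ≤ ((3/4):ℝ)) : P14' t < 0 := by
  have hta : (0:ℝ) ≤ t - (37/50) := by linarith
  have hbt : (0:ℝ) ≤ (3/4) - t := by linarith
  have key : (1:ℝ) * (-(P14' t)) = 1700594140203302936243843319398400*((3/4) - t)^14 + 23859543619590956048143513622118400*(t - (37/50))^1*((3/4) - t)^13 + 155439123514854986994361461022720000*(t - (37/50))^2*((3/4) - t)^12 + 623241021687883504645253925120000000*(t - (37/50))^3*((3/4) - t)^11 + 1718203827266064287383916334400000000*(t - (37/50))^4*((3/4) - t)^10 + 3445405033871712440662269700000000000*(t - (37/50))^5*((3/4) - t)^9 + 5182223951903573609297620500000000000*(t - (37/50))^6*((3/4) - t)^8 + 5939380572497892209003037500000000000*(t - (37/50))^7*((3/4) - t)^7 + 5212307013799262024595195312500000000*(t - (37/50))^8*((3/4) - t)^6 + 3485512204388813374469238281250000000*(t - (37/50))^9*((3/4) - t)^5 + 1748279731905843646484375000000000000*(t - (37/50))^10*((3/4) - t)^4 + 637820242196553320465087890625000000*(t - (37/50))^11*((3/4) - t)^3 +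 159993910040989336967468261718750000*(t - (37/50))^12*((3/4) - t)^2 + 24700152045477998256683349609375000*(t - (37/50))^13*((3/4) - t)^1 + 1770617737132608890533447265625000*(t - (37/50))^14 := by
    unfold P14'; ring
  have hm1 : (0:ℝ) ≤ 23859543619590956048143513622118400*(t - (37/50))^1*((3/4) - t)^13 := mul_nonneg (mul_nonneg (by norm_num) (pow_nonneg hta 1)) (pow_nonneg hbt 13)
  have hm2 : (0:ℝ) ≤ 155439123514854986994361461022720000*(t - (37/50))^2*((3/4) - t)^12 := mul_nonneg (mul_nonneg (by norm_num) (pow_nonneg hta 2)) (pow_nonneg hbt 12)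
  have hm3 : (0:ℝ) ≤ 623241021687883504645253925120000000*(t - (37/50))^3*((3/4) - t)^11 := mul_nonneg (mul_nonneg (by norm_num) (pow_nonneg hta 3)) (pow_nonneg hbt 11)
  have hm4 : (0:ℝ) ≤ 1718203827266064287383916334400000000*(t - (37/50))^4*((3/4) - t)^10 := mul_nonneg (mul_nonneg (by norm_num) (pow_nonneg hta 4)) (pow_nonneg hbt 10)
  have hm5 : (0:ℝ) ≤ 3445405033871712440662269700000000000*(t - (37/50))^5*((3/4) - t)^9 := mul_nonneg (mul_nonneg (by norm_num) (pow_nonneg hta 5)) (pow_nonneg hbt 9)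
  have hm6 : (0:ℝ) ≤ 5182223951903573609297620500000000000*(t - (37/50))^6*((3/4) - t)^8 := mul_nonneg (mul_nonneg (by norm_num) (pow_nonneg hta 6)) (pow_nonneg hbt 8)
  have hm7 : (0:ℝ) ≤ 5939380572497892209003037500000000000*(t - (37/50))^7*((3/4) - t)^7 := mul_nonneg (mul_nonneg (by norm_num) (pow_nonneg hta 7)) (pow_nonneg hbt 7)
  have hm8 : (0:ℝ) ≤ 5212307013799262024595195312500000000*(t - (37/50))^8*((3/4) - t)^6 := mul_nonneg (mul_nonneg (by norm_num) (pow_nonneg hta 8)) (pow_nonneg hbt 6)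
  have hm9 : (0:ℝ) ≤ 3485512204388813374469238281250000000*(t - (37/50))^9*((3/4) - t)^5 := mul_nonneg (mul_nonneg (by norm_num) (pow_nonneg hta 9)) (pow_nonneg hbt 5)
  have hm10 : (0:ℝ) ≤ 1748279731905843646484375000000000000*(t - (37/50))^10*((3/4) - t)^4 := mul_nonneg (mul_nonneg (by norm_num) (pow_nonneg hta 10)) (pow_nonneg hbt 4)
  have hm11 : (0:ℝ) ≤ 637820242196553320465087890625000000*(t - (37/50))^11*((3/4) - t)^3 := mul_nonneg (mul_nonneg (by norm_num) (pow_nonneg hta 11)) (pow_nonneg hbt 3)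
  have hm12 : (0:ℝ) ≤ 159993910040989336967468261718750000*(t - (37/50))^12*((3/4) - t)^2 := mul_nonneg (mul_nonneg (by norm_num) (pow_nonneg hta 12)) (pow_nonneg hbt 2)
  have hm13 : (0:ℝ) ≤ 24700152045477998256683349609375000*(t - (37/50))^13*((3/4) - t)^1 := mul_nonneg (mul_nonneg (by norm_num) (pow_nonneg hta 13)) (pow_nonneg hbt 1)
  have hm0 : (0:ℝ) ≤ 1700594140203302936243843319398400*((3/4) - t)^14 := mul_nonneg (by norm_num) (pow_nonneg hbt 14)
  have hmm : (0:ℝ) ≤ 1770617737132608890533447265625000*(t - (37/50))^14 := mul_nonneg (by norm_num) (pow_nonneg hta 14)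
  rcases le_total t ((149/200):ℝ) with hc | hc
  · have h' : ((1/200):ℝ) ≤ (3/4) - t := by linarith
    have hp : ((1/163840000000000000000000000000000):ℝ) ≤ ((3/4) - t)^14 := by
      calc ((1/163840000000000000000000000000000):ℝ) = ((1/200):ℝ)^14 := by norm_num
        _ ≤ ((3/4) - t)^14 := pow_le_pow_left₀ (by norm_num) h' 14
    have h0' : (1700594140203302936243843319398400:ℝ)*((1/163840000000000000000000000000000):ℝ) ≤ 1700594140203302936243843319398400*((3/4) - t)^14 := mul_le_mul_of_nonneg_left hp (by norm_num)
    linarith [key, h0', hmm, hm1, hm2, hm3, hm4, hm5, hm6, hm7, hm8, hm9, hm10, hm11, hm12, hm13]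
  · have h' : ((1/200):ℝ) ≤ t - (37/50) := by linarith
    have hp : ((1/163840000000000000000000000000000):ℝ) ≤ (t - (37/50))^14 := by
      calc ((1/163840000000000000000000000000000):ℝ) = ((1/200):ℝ)^14 := by norm_num
        _ ≤ (t - (37/50))^14 := pow_le_pow_left₀ (by norm_num) h' 14
    have h0' : (1770617737132608890533447265625000:ℝ)*((1/163840000000000000000000000000000):ℝ) ≤ 1770617737132608890533447265625000*(t - (37/50))^14 := mul_le_mul_of_nonneg_left hp (by norm_num)
    linarith [key, h0', hm0, hm1, hm2, hm3, hm4, hm5, hm6, hm7, hm8, hm9, hm10, hm11, hm12, hm13]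

lemma P14_neg_C {t : ℝ} (h1 : ((3/4):ℝ) ≤ t) (h2 : t ≤ ((89/50):ℝ)) : P14 t < 0 := by
  have hta : (0:ℝ) ≤ t - (3/4) := by linarith
  have hbt : (0:ℝ) ≤ (89/50) - t := by linarith
  have key : (15125897248551112432256145169:ℝ) * (-(P14 t)) = 10417615812756121158599853515625*((89/50) - t)^14 + 1969582890625172853469848632812500*(t - (3/4))^1*((89/50) - t)^13 + 29350859413575362920761108398437500*(t - (3/4))^2*((89/50) - t)^12 + 268475842149224365615844726562500000*(t - (3/4))^3*((89/50) - t)^11 + 1477520718642213958436584472656250000*(t - (3/4))^4*((89/50) - t)^10 + 5086065134951049686487060546875000000*(t - (3/4))^5*((89/50) - t)^9 + 11757692275632008328342568359375000000*(t - (3/4))^6*((89/50) - t)^8 + 19635561044760029543673668750000000000*(t - (3/4))^7*((89/50) - t)^7 + 25256445332909846372760885187500000000*(t - (3/4))^8*((89/50) - t)^6 + 25714203677946448656531951710000000000*(t - (3/4))^9*((89/50) - t)^5 + 19987059306782023571802460149200000000*(t - (3/4))^10*((89/50) - t)^4 + 10820256554856219119957102185088000000*(t - (3/4))^11*((89/50)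 - t)^3 + 3540413481176140534543387747110400000*(t - (3/4))^12*((89/50) - t)^2 + 526963500494061017897283369941811200*(t - (3/4))^13*((89/50) - t)^1 + 4572901491363121411014038543220736*(t - (3/4))^14 := by
    unfold P14; ring
  have hm1 : (0:ℝ) ≤ 1969582890625172853469848632812500*(t - (3/4))^1*((89/50) - t)^13 := mul_nonneg (mul_nonneg (by norm_num) (pow_nonneg hta 1)) (pow_nonneg hbt 13)
  have hm2 : (0:ℝ) ≤ 29350859413575362920761108398437500*(t - (3/4))^2*((89/50) - t)^12 := mul_nonneg (mul_nonneg (by norm_num) (pow_nonneg hta 2)) (pow_nonneg hbt 12)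
  have hm3 : (0:ℝ) ≤ 268475842149224365615844726562500000*(t - (3/4))^3*((89/50) - t)^11 := mul_nonneg (mul_nonneg (by norm_num) (pow_nonneg hta 3)) (pow_nonneg hbt 11)
  have hm4 : (0:ℝ) ≤ 1477520718642213958436584472656250000*(t - (3/4))^4*((89/50) - t)^10 := mul_nonneg (mul_nonneg (by norm_num) (pow_nonneg hta 4)) (pow_nonneg hbt 10)
  have hm5 : (0:ℝ) ≤ 5086065134951049686487060546875000000*(t - (3/4))^5*((89/50) - t)^9 := mul_nonneg (mul_nonneg (by norm_num) (pow_nonneg hta 5)) (pow_nonneg hbt 9)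
  have hm6 : (0:ℝ) ≤ 11757692275632008328342568359375000000*(t - (3/4))^6*((89/50) - t)^8 := mul_nonneg (mul_nonneg (by norm_num) (pow_nonneg hta 6)) (pow_nonneg hbt 8)
  have hm7 : (0:ℝ) ≤ 19635561044760029543673668750000000000*(t - (3/4))^7*((89/50) - t)^7 := mul_nonneg (mul_nonneg (by norm_num) (pow_nonneg hta 7)) (pow_nonneg hbt 7)
  have hm8 : (0:ℝ) ≤ 25256445332909846372760885187500000000*(t - (3/4))^8*((89/50) - t)^6 := mul_nonneg (mul_nonneg (by norm_num) (pow_nonneg hta 8)) (pow_nonneg hbt 6)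
  have hm9 : (0:ℝ) ≤ 25714203677946448656531951710000000000*(t - (3/4))^9*((89/50) - t)^5 := mul_nonneg (mul_nonneg (by norm_num) (pow_nonneg hta 9)) (pow_nonneg hbt 5)
  have hm10 : (0:ℝ) ≤ 19987059306782023571802460149200000000*(t - (3/4))^10*((89/50) - t)^4 := mul_nonneg (mul_nonneg (by norm_num) (pow_nonneg hta 10)) (pow_nonneg hbt 4)
  have hm11 : (0:ℝ) ≤ 10820256554856219119957102185088000000*(t - (3/4))^11*((89/50) - t)^3 := mul_nonneg (mul_nonneg (by norm_num) (pow_nonneg hta 11)) (pow_nonneg hbt 3)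
  have hm12 : (0:ℝ) ≤ 3540413481176140534543387747110400000*(t - (3/4))^12*((89/50) - t)^2 := mul_nonneg (mul_nonneg (by norm_num) (pow_nonneg hta 12)) (pow_nonneg hbt 2)
  have hm13 : (0:ℝ) ≤ 526963500494061017897283369941811200*(t - (3/4))^13*((89/50) - t)^1 := mul_nonneg (mul_nonneg (by norm_num) (pow_nonneg hta 13)) (pow_nonneg hbt 1)
  have hm0 : (0:ℝ) ≤ 10417615812756121158599853515625*((89/50) - t)^14 := mul_nonneg (by norm_num) (pow_nonneg hbt 14)
  have hmm : (0:ℝ) ≤ 4572901491363121411014038543220736*(t - (3/4))^14 := mul_nonneg (by norm_num) (pow_nonneg hta 14)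
  rcases le_total t ((253/200):ℝ) with hc | hc
  · have h' : ((103/200):ℝ) ≤ (89/50) - t := by linarith
    have hp : ((15125897248551112432256145169/163840000000000000000000000000000):ℝ) ≤ ((89/50) - t)^14 := by
      calc ((15125897248551112432256145169/163840000000000000000000000000000):ℝ) = ((103/200):ℝ)^14 := by norm_num
        _ ≤ ((89/50) - t)^14 := pow_le_pow_left₀ (by norm_num) h' 14
    have h0' : (10417615812756121158599853515625:ℝ)*((15125897248551112432256145169/163840000000000000000000000000000):ℝ) ≤ 10417615812756121158599853515625*((89/50) - t)^14 := mul_le_mul_of_nonneg_left hp (by norm_num)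
    linarith [key, h0', hmm, hm1, hm2, hm3, hm4, hm5, hm6, hm7, hm8, hm9, hm10, hm11, hm12, hm13]
  · have h' : ((103/200):ℝ) ≤ t - (3/4) := by linarith
    have hp : ((15125897248551112432256145169/163840000000000000000000000000000):ℝ) ≤ (t - (3/4))^14 := by
      calc ((15125897248551112432256145169/163840000000000000000000000000000):ℝ) = ((103/200):ℝ)^14 := by norm_num
        _ ≤ (t - (3/4))^14 := pow_le_pow_left₀ (by norm_num) h' 14
    have h0' : (4572901491363121411014038543220736:ℝ)*((15125897248551112432256145169/163840000000000000000000000000000):ℝ) ≤ 4572901491363121411014038543220736*(t - (3/4))^14 := mul_le_mul_of_nonneg_left hp (by norm_num)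
    linarith [key, h0', hm0, hm1, hm2, hm3, hm4, hm5, hm6, hm7, hm8, hm9, hm10, hm11, hm12, hm13]

lemma P14'_pos_D {t : ℝ} (h1 : ((89/50):ℝ) ≤ t) (h2 : t ≤ ((9/5):ℝ)) : 0 < P14' t := by
  have hta : (0:ℝ) ≤ t - (89/50) := by linarith
  have hbt : (0:ℝ) ≤ (9/5) - t := by linarith
  have key : (1:ℝ) * (P14' t) = 27432806788470951896183751987300*((9/5) - t)^14 + 390719089506504859524447985116300*(t - (89/50))^1*((9/5) - t)^13 + 2583483807632868666948758450169000*(t - (89/50))^2*((9/5) - t)^12 + 10511278341784590654481593307840000*(t - (89/50))^3*((9/5) - t)^11 + 29399550867630638023661243635800000*(t - (89/50))^4*((9/5) - t)^10 + 59797967754738426271347458555000000*(t - (89/50))^5*((9/5) - t)^9 + 91213111774550314836677846810000000*(t - (89/50))^6*((9/5) - t)^8 + 105996917302682463528432820800000000*(t - (89/50))^7*((9/5) - t)^7 + 94299695086056553176635398000000000*(t - (89/50))^8*((9/5) - t)^6 + 63913640817102480923562610000000000*(t - (89/50))^9*((9/5) - t)^5 + 32486591477172494668057500000000000*(t - (89/50))^10*((9/5)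 - t)^4 + 12008219314293081779768000000000000*(t - (89/50))^11*((9/5) - t)^3 + 3051355814288018689140000000000000*(t - (89/50))^12*((9/5) - t)^2 + 477113049917459898900000000000000*(t - (89/50))^13*((9/5) - t)^1 + 34634035905648903000000000000000*(t - (89/50))^14 := by
    unfold P14'; ring
  have hm1 : (0:ℝ) ≤ 390719089506504859524447985116300*(t - (89/50))^1*((9/5) - t)^13 := mul_nonneg (mul_nonneg (by norm_num) (pow_nonneg hta 1)) (pow_nonneg hbt 13)
  have hm2 : (0:ℝ) ≤ 2583483807632868666948758450169000*(t - (89/50))^2*((9/5) - t)^12 := mul_nonneg (mul_nonneg (by norm_num) (pow_nonneg hta 2)) (pow_nonneg hbt 12)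
  have hm3 : (0:ℝ) ≤ 10511278341784590654481593307840000*(t - (89/50))^3*((9/5) - t)^11 := mul_nonneg (mul_nonneg (by norm_num) (pow_nonneg hta 3)) (pow_nonneg hbt 11)
  have hm4 : (0:ℝ) ≤ 29399550867630638023661243635800000*(t - (89/50))^4*((9/5) - t)^10 := mul_nonneg (mul_nonneg (by norm_num) (pow_nonneg hta 4)) (pow_nonneg hbt 10)
  have hm5 : (0:ℝ) ≤ 59797967754738426271347458555000000*(t - (89/50))^5*((9/5) - t)^9 := mul_nonneg (mul_nonneg (by norm_num) (pow_nonneg hta 5)) (pow_nonneg hbt 9)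
  have hm6 : (0:ℝ) ≤ 91213111774550314836677846810000000*(t - (89/50))^6*((9/5) - t)^8 := mul_nonneg (mul_nonneg (by norm_num) (pow_nonneg hta 6)) (pow_nonneg hbt 8)
  have hm7 : (0:ℝ) ≤ 105996917302682463528432820800000000*(t - (89/50))^7*((9/5) - t)^7 := mul_nonneg (mul_nonneg (by norm_num) (pow_nonneg hta 7)) (pow_nonneg hbt 7)
  have hm8 : (0:ℝ) ≤ 94299695086056553176635398000000000*(t - (89/50))^8*((9/5) - t)^6 := mul_nonneg (mul_nonneg (by norm_num) (pow_nonneg hta 8)) (pow_nonneg hbt 6)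
  have hm9 : (0:ℝ) ≤ 63913640817102480923562610000000000*(t - (89/50))^9*((9/5) - t)^5 := mul_nonneg (mul_nonneg (by norm_num) (pow_nonneg hta 9)) (pow_nonneg hbt 5)
  have hm10 : (0:ℝ) ≤ 32486591477172494668057500000000000*(t - (89/50))^10*((9/5) - t)^4 := mul_nonneg (mul_nonneg (by norm_num) (pow_nonneg hta 10)) (pow_nonneg hbt 4)
  have hm11 : (0:ℝ) ≤ 12008219314293081779768000000000000*(t - (89/50))^11*((9/5) - t)^3 := mul_nonneg (mul_nonneg (by norm_num) (pow_nonneg hta 11)) (pow_nonneg hbt 3)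
  have hm12 : (0:ℝ) ≤ 3051355814288018689140000000000000*(t - (89/50))^12*((9/5) - t)^2 := mul_nonneg (mul_nonneg (by norm_num) (pow_nonneg hta 12)) (pow_nonneg hbt 2)
  have hm13 : (0:ℝ) ≤ 477113049917459898900000000000000*(t - (89/50))^13*((9/5) - t)^1 := mul_nonneg (mul_nonneg (by norm_num) (pow_nonneg hta 13)) (pow_nonneg hbt 1)
  have hm0 : (0:ℝ) ≤ 27432806788470951896183751987300*((9/5) - t)^14 := mul_nonneg (by norm_num) (pow_nonneg hbt 14)
  have hmm : (0:ℝ) ≤ 34634035905648903000000000000000*(t - (89/50))^14 := mul_nonneg (by norm_num) (pow_nonneg hta 14)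
  rcases le_total t ((179/100):ℝ) with hc | hc
  · have h' : ((1/100):ℝ) ≤ (9/5) - t := by linarith
    have hp : ((1/10000000000000000000000000000):ℝ) ≤ ((9/5) - t)^14 := by
      calc ((1/10000000000000000000000000000):ℝ) = ((1/100):ℝ)^14 := by norm_num
        _ ≤ ((9/5) - t)^14 := pow_le_pow_left₀ (by norm_num) h' 14
    have h0' : (27432806788470951896183751987300:ℝ)*((1/10000000000000000000000000000):ℝ) ≤ 27432806788470951896183751987300*((9/5) - t)^14 := mul_le_mul_of_nonneg_left hp (by norm_num)
    linarith [key, h0', hmm, hm1, hm2, hm3, hm4, hm5, hm6, hm7, hm8, hm9, hm10, hm11, hm12, hm13]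
  · have h' : ((1/100):ℝ) ≤ t - (89/50) := by linarith
    have hp : ((1/10000000000000000000000000000):ℝ) ≤ (t - (89/50))^14 := by
      calc ((1/10000000000000000000000000000):ℝ) = ((1/100):ℝ)^14 := by norm_num
        _ ≤ (t - (89/50))^14 := pow_le_pow_left₀ (by norm_num) h' 14
    have h0' : (34634035905648903000000000000000:ℝ)*((1/10000000000000000000000000000):ℝ) ≤ 34634035905648903000000000000000*(t - (89/50))^14 := mul_le_mul_of_nonneg_left hp (by norm_num)
    linarith [key, h0', hm0, hm1, hm2, hm3, hm4, hm5, hm6, hm7, hm8, hm9, hm10, hm11, hm12, hm13]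

lemma P14_pos_E {t : ℝ} (h1 : ((9/5):ℝ) ≤ t) (h2 : t ≤ (3:ℝ)) : 0 < P14 t := by
  have hta : (0:ℝ) ≤ t - (9/5) := by linarith
  have hbt : (0:ℝ) ≤ 3 - t := by linarith
  have key : (725594112:ℝ) * (P14 t) = 31455696126897*(3 - t)^14 + 4288605957515325*(t - (9/5))^1*(3 - t)^13 + 78767584972234075*(t - (9/5))^2*(3 - t)^12 + 699940665049494250*(t - (9/5))^3*(3 - t)^11 + 3825540404229753125*(t - (9/5))^4*(3 - t)^10 + 14207455431114171875*(t - (9/5))^5*(3 - t)^9 + 37700500193704734375*(t - (9/5))^6*(3 - t)^8 + 73352676578164687500*(t - (9/5))^7*(3 - t)^7 + 105760869062551171875*(t - (9/5))^8*(3 - t)^6 + 112833520303669921875*(t - (9/5))^9*(3 - t)^5 + 87863631606650390625*(t - (9/5))^10*(3 - t)^4 + 48482993064941406250*(t - (9/5))^11*(3 - t)^3 + 17930378896240234375*(t - (9/5))^12*(3 - t)^2 + 3978117803955078125*(t - (9/5))^13*(3 - t)^1 + 399293878173828125*(t - (9/5))^14 := by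
    unfold P14; ring
  have hm1 : (0:ℝ) ≤ 4288605957515325*(t - (9/5))^1*(3 - t)^13 := mul_nonneg (mul_nonneg (by norm_num) (pow_nonneg hta 1)) (pow_nonneg hbt 13)
  have hm2 : (0:ℝ) ≤ 78767584972234075*(t - (9/5))^2*(3 - t)^12 := mul_nonneg (mul_nonneg (by norm_num) (pow_nonneg hta 2)) (pow_nonneg hbt 12)
  have hm3 : (0:ℝ) ≤ 699940665049494250*(t - (9/5))^3*(3 - t)^11 := mul_nonneg (mul_nonneg (by norm_num) (pow_nonneg hta 3)) (pow_nonneg hbt 11)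
  have hm4 : (0:ℝ) ≤ 3825540404229753125*(t - (9/5))^4*(3 - t)^10 := mul_nonneg (mul_nonneg (by norm_num) (pow_nonneg hta 4)) (pow_nonneg hbt 10)
  have hm5 : (0:ℝ) ≤ 14207455431114171875*(t - (9/5))^5*(3 - t)^9 := mul_nonneg (mul_nonneg (by norm_num) (pow_nonneg hta 5)) (pow_nonneg hbt 9)
  have hm6 : (0:ℝ) ≤ 37700500193704734375*(t - (9/5))^6*(3 - t)^8 := mul_nonneg (mul_nonneg (by norm_num) (pow_nonneg hta 6)) (pow_nonneg hbt 8)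
  have hm7 : (0:ℝ) ≤ 73352676578164687500*(t - (9/5))^7*(3 - t)^7 := mul_nonneg (mul_nonneg (by norm_num) (pow_nonneg hta 7)) (pow_nonneg hbt 7)
  have hm8 : (0:ℝ) ≤ 105760869062551171875*(t - (9/5))^8*(3 - t)^6 := mul_nonneg (mul_nonneg (by norm_num) (pow_nonneg hta 8)) (pow_nonneg hbt 6)
  have hm9 : (0:ℝ) ≤ 112833520303669921875*(t - (9/5))^9*(3 - t)^5 := mul_nonneg (mul_nonneg (by norm_num) (pow_nonneg hta 9)) (pow_nonneg hbt 5)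
  have hm10 : (0:ℝ) ≤ 87863631606650390625*(t - (9/5))^10*(3 - t)^4 := mul_nonneg (mul_nonneg (by norm_num) (pow_nonneg hta 10)) (pow_nonneg hbt 4)
  have hm11 : (0:ℝ) ≤ 48482993064941406250*(t - (9/5))^11*(3 - t)^3 := mul_nonneg (mul_nonneg (by norm_num) (pow_nonneg hta 11)) (pow_nonneg hbt 3)
  have hm12 : (0:ℝ) ≤ 17930378896240234375*(t - (9/5))^12*(3 - t)^2 := mul_nonneg (mul_nonneg (by norm_num) (pow_nonneg hta 12)) (pow_nonneg hbt 2)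
  have hm13 : (0:ℝ) ≤ 3978117803955078125*(t - (9/5))^13*(3 - t)^1 := mul_nonneg (mul_nonneg (by norm_num) (pow_nonneg hta 13)) (pow_nonneg hbt 1)
  have hm0 : (0:ℝ) ≤ 31455696126897*(3 - t)^14 := mul_nonneg (by norm_num) (pow_nonneg hbt 14)
  have hmm : (0:ℝ) ≤ 399293878173828125*(t - (9/5))^14 := mul_nonneg (by norm_num) (pow_nonneg hta 14)
  rcases le_total t ((12/5):ℝ) with hc | hc
  · have h' : ((3/5):ℝ) ≤ 3 - t := by linarith
    have hp : ((4782969/6103515625):ℝ) ≤ (3 - t)^14 := by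
      calc ((4782969/6103515625):ℝ) = ((3/5):ℝ)^14 := by norm_num
        _ ≤ (3 - t)^14 := pow_le_pow_left₀ (by norm_num) h' 14
    have h0' : (31455696126897:ℝ)*((4782969/6103515625):ℝ) ≤ 31455696126897*(3 - t)^14 := mul_le_mul_of_nonneg_left hp (by norm_num)
    linarith [key, h0', hmm, hm1, hm2, hm3, hm4, hm5, hm6, hm7, hm8, hm9, hm10, hm11, hm12, hm13]
  · have h' : ((3/5):ℝ) ≤ t - (9/5) := by linarith
    have hp : ((4782969/6103515625):ℝ) ≤ (t - (9/5))^14 := by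
      calc ((4782969/6103515625):ℝ) = ((3/5):ℝ)^14 := by norm_num
        _ ≤ (t - (9/5))^14 := pow_le_pow_left₀ (by norm_num) h' 14
    have h0' : (399293878173828125:ℝ)*((4782969/6103515625):ℝ) ≤ 399293878173828125*(t - (9/5))^14 := mul_le_mul_of_nonneg_left hp (by norm_num)
    linarith [key, h0', hm0, hm1, hm2, hm3, hm4, hm5, hm6, hm7, hm8, hm9, hm10, hm11, hm12, hm13]

lemma P14_pos_F {t : ℝ} (h1 : (3:ℝ) ≤ t) (h2 : t ≤ (4:ℝ)) : 0 < P14 t := by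
  have hta : (0:ℝ) ≤ t - 3 := by linarith
  have hbt : (0:ℝ) ≤ 4 - t := by linarith
  have key : (1:ℝ) * (P14 t) = 7065393372*(4 - t)^14 + 122685362658*(t - 3)^1*(4 - t)^13 + 983300572029*(t - 3)^2*(4 - t)^12 + 4819680651592*(t - 3)^3*(4 - t)^11 + 16133412433822*(t - 3)^4*(4 - t)^10 + 38995256856532*(t - 3)^5*(4 - t)^9 + 70141269895146*(t - 3)^6*(4 - t)^8 + 95309015572336*(t - 3)^7*(4 - t)^7 + 98226118662276*(t - 3)^8*(4 - t)^6 + 76326775653040*(t - 3)^9*(4 - t)^5 + 43963027481080*(t - 3)^10*(4 - t)^4 + 18172851859456*(t - 3)^11*(4 - t)^3 + 5086935878480*(t - 3)^12*(4 - t)^2 + 861248690176*(t - 3)^13*(4 - t)^1 + 66384358016*(t - 3)^14 := by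
    unfold P14; ring
  have hm1 : (0:ℝ) ≤ 122685362658*(t - 3)^1*(4 - t)^13 := mul_nonneg (mul_nonneg (by norm_num) (pow_nonneg hta 1)) (pow_nonneg hbt 13)
  have hm2 : (0:ℝ) ≤ 983300572029*(t - 3)^2*(4 - t)^12 := mul_nonneg (mul_nonneg (by norm_num) (pow_nonneg hta 2)) (pow_nonneg hbt 12)
  have hm3 : (0:ℝ) ≤ 4819680651592*(t - 3)^3*(4 - t)^11 := mul_nonneg (mul_nonneg (by norm_num) (pow_nonneg hta 3)) (pow_nonneg hbt 11)
  have hm4 : (0:ℝ) ≤ 16133412433822*(t - 3)^4*(4 - t)^10 := mul_nonneg (mul_nonneg (by norm_num) (pow_nonneg hta 4)) (pow_nonneg hbt 10)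
  have hm5 : (0:ℝ) ≤ 38995256856532*(t - 3)^5*(4 - t)^9 := mul_nonneg (mul_nonneg (by norm_num) (pow_nonneg hta 5)) (pow_nonneg hbt 9)
  have hm6 : (0:ℝ) ≤ 70141269895146*(t - 3)^6*(4 - t)^8 := mul_nonneg (mul_nonneg (by norm_num) (pow_nonneg hta 6)) (pow_nonneg hbt 8)
  have hm7 : (0:ℝ) ≤ 95309015572336*(t - 3)^7*(4 - t)^7 := mul_nonneg (mul_nonneg (by norm_num) (pow_nonneg hta 7)) (pow_nonneg hbt 7)
  have hm8 : (0:ℝ) ≤ 98226118662276*(t - 3)^8*(4 - t)^6 := mul_nonneg (mul_nonneg (by norm_num) (pow_nonneg hta 8)) (pow_nonneg hbt 6)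
  have hm9 : (0:ℝ) ≤ 76326775653040*(t - 3)^9*(4 - t)^5 := mul_nonneg (mul_nonneg (by norm_num) (pow_nonneg hta 9)) (pow_nonneg hbt 5)
  have hm10 : (0:ℝ) ≤ 43963027481080*(t - 3)^10*(4 - t)^4 := mul_nonneg (mul_nonneg (by norm_num) (pow_nonneg hta 10)) (pow_nonneg hbt 4)
  have hm11 : (0:ℝ) ≤ 18172851859456*(t - 3)^11*(4 - t)^3 := mul_nonneg (mul_nonneg (by norm_num) (pow_nonneg hta 11)) (pow_nonneg hbt 3)
  have hm12 : (0:ℝ) ≤ 5086935878480*(t - 3)^12*(4 - t)^2 := mul_nonneg (mul_nonneg (by norm_num) (pow_nonneg hta 12)) (pow_nonneg hbt 2)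
  have hm13 : (0:ℝ) ≤ 861248690176*(t - 3)^13*(4 - t)^1 := mul_nonneg (mul_nonneg (by norm_num) (pow_nonneg hta 13)) (pow_nonneg hbt 1)
  have hm0 : (0:ℝ) ≤ 7065393372*(4 - t)^14 := mul_nonneg (by norm_num) (pow_nonneg hbt 14)
  have hmm : (0:ℝ) ≤ 66384358016*(t - 3)^14 := mul_nonneg (by norm_num) (pow_nonneg hta 14)
  rcases le_total t ((7/2):ℝ) with hc | hc
  · have h' : ((1/2):ℝ) ≤ 4 - t := by linarith
    have hp : ((1/16384):ℝ) ≤ (4 - t)^14 := by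
      calc ((1/16384):ℝ) = ((1/2):ℝ)^14 := by norm_num
        _ ≤ (4 - t)^14 := pow_le_pow_left₀ (by norm_num) h' 14
    have h0' : (7065393372:ℝ)*((1/16384):ℝ) ≤ 7065393372*(4 - t)^14 := mul_le_mul_of_nonneg_left hp (by norm_num)
    linarith [key, h0', hmm, hm1, hm2, hm3, hm4, hm5, hm6, hm7, hm8, hm9, hm10, hm11, hm12, hm13]
  · have h' : ((1/2):ℝ) ≤ t - 3 := by linarith
    have hp : ((1/16384):ℝ) ≤ (t - 3)^14 := by
      calc ((1/16384):ℝ) = ((1/2):ℝ)^14 := by norm_num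
        _ ≤ (t - 3)^14 := pow_le_pow_left₀ (by norm_num) h' 14
    have h0' : (66384358016:ℝ)*((1/16384):ℝ) ≤ 66384358016*(t - 3)^14 := mul_le_mul_of_nonneg_left hp (by norm_num)
    linarith [key, h0', hm0, hm1, hm2, hm3, hm4, hm5, hm6, hm7, hm8, hm9, hm10, hm11, hm12, hm13]

lemma P14_pos_G {t : ℝ} (h1 : (4:ℝ) ≤ t) (h2 : t ≤ ((9/2):ℝ)) : 0 < P14 t := by
  have hta : (0:ℝ) ≤ t - 4 := by linarith
  have hbt : (0:ℝ) ≤ (9/2) - t := by linarith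
  have key : (1:ℝ) * (P14 t) = 1087641321734144*((9/2) - t)^14 + 15785118486495232*(t - 4)^1*((9/2) - t)^13 + 105951339219845120*(t - 4)^2*((9/2) - t)^12 + 435785174719528960*(t - 4)^3*((9/2) - t)^11 + 1226594892484993024*(t - 4)^4*((9/2) - t)^10 + 2498173132159270912*(t - 4)^5*((9/2) - t)^9 + 3794704710985546752*(t - 4)^6*((9/2) - t)^8 + 4364671817518004224*(t - 4)^7*((9/2) - t)^7 + 3817377282594588288*(t - 4)^8*((9/2) - t)^6 + 2524438131140262400*(t - 4)^9*((9/2) - t)^5 + 1241428006381797376*(t - 4)^10*((9/2) - t)^4 + 439768919784320512*(t - 4)^11*((9/2) - t)^3 + 105959752535764092*(t - 4)^12*((9/2) - t)^2 + 15523098691979448*(t - 4)^13*((9/2) - t)^1 + 1041766975621323*(t - 4)^14 := by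
    unfold P14; ring
  have hm1 : (0:ℝ) ≤ 15785118486495232*(t - 4)^1*((9/2) - t)^13 := mul_nonneg (mul_nonneg (by norm_num) (pow_nonneg hta 1)) (pow_nonneg hbt 13)
  have hm2 : (0:ℝ) ≤ 105951339219845120*(t - 4)^2*((9/2) - t)^12 := mul_nonneg (mul_nonneg (by norm_num) (pow_nonneg hta 2)) (pow_nonneg hbt 12)
  have hm3 : (0:ℝ) ≤ 435785174719528960*(t - 4)^3*((9/2) - t)^11 := mul_nonneg (mul_nonneg (by norm_num) (pow_nonneg hta 3)) (pow_nonneg hbt 11)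
  have hm4 : (0:ℝ) ≤ 1226594892484993024*(t - 4)^4*((9/2) - t)^10 := mul_nonneg (mul_nonneg (by norm_num) (pow_nonneg hta 4)) (pow_nonneg hbt 10)
  have hm5 : (0:ℝ) ≤ 2498173132159270912*(t - 4)^5*((9/2) - t)^9 := mul_nonneg (mul_nonneg (by norm_num) (pow_nonneg hta 5)) (pow_nonneg hbt 9)
  have hm6 : (0:ℝ) ≤ 3794704710985546752*(t - 4)^6*((9/2) - t)^8 := mul_nonneg (mul_nonneg (by norm_num) (pow_nonneg hta 6)) (pow_nonneg hbt 8)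
  have hm7 : (0:ℝ) ≤ 4364671817518004224*(t - 4)^7*((9/2) - t)^7 := mul_nonneg (mul_nonneg (by norm_num) (pow_nonneg hta 7)) (pow_nonneg hbt 7)
  have hm8 : (0:ℝ) ≤ 3817377282594588288*(t - 4)^8*((9/2) - t)^6 := mul_nonneg (mul_nonneg (by norm_num) (pow_nonneg hta 8)) (pow_nonneg hbt 6)
  have hm9 : (0:ℝ) ≤ 2524438131140262400*(t - 4)^9*((9/2) - t)^5 := mul_nonneg (mul_nonneg (by norm_num) (pow_nonneg hta 9)) (pow_nonneg hbt 5)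
  have hm10 : (0:ℝ) ≤ 1241428006381797376*(t - 4)^10*((9/2) - t)^4 := mul_nonneg (mul_nonneg (by norm_num) (pow_nonneg hta 10)) (pow_nonneg hbt 4)
  have hm11 : (0:ℝ) ≤ 439768919784320512*(t - 4)^11*((9/2) - t)^3 := mul_nonneg (mul_nonneg (by norm_num) (pow_nonneg hta 11)) (pow_nonneg hbt 3)
  have hm12 : (0:ℝ) ≤ 105959752535764092*(t - 4)^12*((9/2) - t)^2 := mul_nonneg (mul_nonneg (by norm_num) (pow_nonneg hta 12)) (pow_nonneg hbt 2)
  have hm13 : (0:ℝ) ≤ 15523098691979448*(t - 4)^13*((9/2) - t)^1 := mul_nonneg (mul_nonneg (by norm_num) (pow_nonneg hta 13)) (pow_nonneg hbt 1)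
  have hm0 : (0:ℝ) ≤ 1087641321734144*((9/2) - t)^14 := mul_nonneg (by norm_num) (pow_nonneg hbt 14)
  have hmm : (0:ℝ) ≤ 1041766975621323*(t - 4)^14 := mul_nonneg (by norm_num) (pow_nonneg hta 14)
  rcases le_total t ((17/4):ℝ) with hc | hc
  · have h' : ((1/4):ℝ) ≤ (9/2) - t := by linarith
    have hp : ((1/268435456):ℝ) ≤ ((9/2) - t)^14 := by
      calc ((1/268435456):ℝ) = ((1/4):ℝ)^14 := by norm_num
        _ ≤ ((9/2) - t)^14 := pow_le_pow_left₀ (by norm_num) h' 14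
    have h0' : (1087641321734144:ℝ)*((1/268435456):ℝ) ≤ 1087641321734144*((9/2) - t)^14 := mul_le_mul_of_nonneg_left hp (by norm_num)
    linarith [key, h0', hmm, hm1, hm2, hm3, hm4, hm5, hm6, hm7, hm8, hm9, hm10, hm11, hm12, hm13]
  · have h' : ((1/4):ℝ) ≤ t - 4 := by linarith
    have hp : ((1/268435456):ℝ) ≤ (t - 4)^14 := by
      calc ((1/268435456):ℝ) = ((1/4):ℝ)^14 := by norm_num
        _ ≤ (t - 4)^14 := pow_le_pow_left₀ (by norm_num) h' 14
    have h0' : (1041766975621323:ℝ)*((1/268435456):ℝ) ≤ 1041766975621323*(t - 4)^14 := mul_le_mul_of_nonneg_left hp (by norm_num)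
    linarith [key, h0', hm0, hm1, hm2, hm3, hm4, hm5, hm6, hm7, hm8, hm9, hm10, hm11, hm12, hm13]

lemma P14_pos_H {t : ℝ} (h1 : ((9/2):ℝ) ≤ t) (h2 : t ≤ (5:ℝ)) : 0 < P14 t := by
  have hta : (0:ℝ) ≤ t - (9/2) := by linarith
  have hbt : (0:ℝ) ≤ 5 - t := by linarith
  have key : (1:ℝ) * (P14 t) = 133346172879529344*(5 - t)^21 + 2680159418210157696*(t - (9/2))^1*(5 - t)^20 + 25467405892663164288*(t - (9/2))^2*(5 - t)^19 + 152019980180410678912*(t - (9/2))^3*(5 - t)^18 + 638804184996694850176*(t - (9/2))^4*(5 - t)^17 + 2006657627352019504512*(t - (9/2))^5*(5 - t)^16 + 4883098947844148087936*(t - (9/2))^6*(5 - t)^15 + 9410787833276133091200*(t - (9/2))^7*(5 - t)^14 + 14556830501702487473664*(t - (9/2))^8*(5 - t)^13 + 18198034727652179574784*(t - (9/2))^9*(5 - t)^12 + 18412892114698917386240*(t - (9/2))^10*(5 - t)^11 + 15017598031723312834560*(t - (9/2))^11*(5 - t)^10 + 9769823378541636345856*(t - (9/2))^12*(5 - t)^9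 + 4971412958124529451008*(t - (9/2))^13*(5 - t)^8 + 1911639149785036455936*(t - (9/2))^14*(5 - t)^7 + 521044520123577565184*(t - (9/2))^15*(5 - t)^6 + 87666717574384189440*(t - (9/2))^16*(5 - t)^5 + 6055934893025132544*(t - (9/2))^17*(5 - t)^4 + 314466201793724416*(t - (9/2))^18*(5 - t)^3 + 542516979743326208*(t - (9/2))^19*(5 - t)^2 + 183573573525307392*(t - (9/2))^20*(5 - t)^1 + 19497261025198080*(t - (9/2))^21 := by
    unfold P14; ring
  have hm1 : (0:ℝ) ≤ 2680159418210157696*(t - (9/2))^1*(5 - t)^20 := mul_nonneg (mul_nonneg (by norm_num) (pow_nonneg hta 1)) (pow_nonneg hbt 20)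
  have hm2 : (0:ℝ) ≤ 25467405892663164288*(t - (9/2))^2*(5 - t)^19 := mul_nonneg (mul_nonneg (by norm_num) (pow_nonneg hta 2)) (pow_nonneg hbt 19)
  have hm3 : (0:ℝ) ≤ 152019980180410678912*(t - (9/2))^3*(5 - t)^18 := mul_nonneg (mul_nonneg (by norm_num) (pow_nonneg hta 3)) (pow_nonneg hbt 18)
  have hm4 : (0:ℝ) ≤ 638804184996694850176*(t - (9/2))^4*(5 - t)^17 := mul_nonneg (mul_nonneg (by norm_num) (pow_nonneg hta 4)) (pow_nonneg hbt 17)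
  have hm5 : (0:ℝ) ≤ 2006657627352019504512*(t - (9/2))^5*(5 - t)^16 := mul_nonneg (mul_nonneg (by norm_num) (pow_nonneg hta 5)) (pow_nonneg hbt 16)
  have hm6 : (0:ℝ) ≤ 4883098947844148087936*(t - (9/2))^6*(5 - t)^15 := mul_nonneg (mul_nonneg (by norm_num) (pow_nonneg hta 6)) (pow_nonneg hbt 15)
  have hm7 : (0:ℝ) ≤ 9410787833276133091200*(t - (9/2))^7*(5 - t)^14 := mul_nonneg (mul_nonneg (by norm_num) (pow_nonneg hta 7)) (pow_nonneg hbt 14)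
  have hm8 : (0:ℝ) ≤ 14556830501702487473664*(t - (9/2))^8*(5 - t)^13 := mul_nonneg (mul_nonneg (by norm_num) (pow_nonneg hta 8)) (pow_nonneg hbt 13)
  have hm9 : (0:ℝ) ≤ 18198034727652179574784*(t - (9/2))^9*(5 - t)^12 := mul_nonneg (mul_nonneg (by norm_num) (pow_nonneg hta 9)) (pow_nonneg hbt 12)
  have hm10 : (0:ℝ) ≤ 18412892114698917386240*(t - (9/2))^10*(5 - t)^11 := mul_nonneg (mul_nonneg (by norm_num) (pow_nonneg hta 10)) (pow_nonneg hbt 11)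
  have hm11 : (0:ℝ) ≤ 15017598031723312834560*(t - (9/2))^11*(5 - t)^10 := mul_nonneg (mul_nonneg (by norm_num) (pow_nonneg hta 11)) (pow_nonneg hbt 10)
  have hm12 : (0:ℝ) ≤ 9769823378541636345856*(t - (9/2))^12*(5 - t)^9 := mul_nonneg (mul_nonneg (by norm_num) (pow_nonneg hta 12)) (pow_nonneg hbt 9)
  have hm13 : (0:ℝ) ≤ 4971412958124529451008*(t - (9/2))^13*(5 - t)^8 := mul_nonneg (mul_nonneg (by norm_num) (pow_nonneg hta 13)) (pow_nonneg hbt 8)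
  have hm14 : (0:ℝ) ≤ 1911639149785036455936*(t - (9/2))^14*(5 - t)^7 := mul_nonneg (mul_nonneg (by norm_num) (pow_nonneg hta 14)) (pow_nonneg hbt 7)
  have hm15 : (0:ℝ) ≤ 521044520123577565184*(t - (9/2))^15*(5 - t)^6 := mul_nonneg (mul_nonneg (by norm_num) (pow_nonneg hta 15)) (pow_nonneg hbt 6)
  have hm16 : (0:ℝ) ≤ 87666717574384189440*(t - (9/2))^16*(5 - t)^5 := mul_nonneg (mul_nonneg (by norm_num) (pow_nonneg hta 16)) (pow_nonneg hbt 5)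
  have hm17 : (0:ℝ) ≤ 6055934893025132544*(t - (9/2))^17*(5 - t)^4 := mul_nonneg (mul_nonneg (by norm_num) (pow_nonneg hta 17)) (pow_nonneg hbt 4)
  have hm18 : (0:ℝ) ≤ 314466201793724416*(t - (9/2))^18*(5 - t)^3 := mul_nonneg (mul_nonneg (by norm_num) (pow_nonneg hta 18)) (pow_nonneg hbt 3)
  have hm19 : (0:ℝ) ≤ 542516979743326208*(t - (9/2))^19*(5 - t)^2 := mul_nonneg (mul_nonneg (by norm_num) (pow_nonneg hta 19)) (pow_nonneg hbt 2)
  have hm20 : (0:ℝ) ≤ 183573573525307392*(t - (9/2))^20*(5 - t)^1 := mul_nonneg (mul_nonneg (by norm_num) (pow_nonneg hta 20)) (pow_nonneg hbt 1)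
  have hm0 : (0:ℝ) ≤ 133346172879529344*(5 - t)^21 := mul_nonneg (by norm_num) (pow_nonneg hbt 21)
  have hmm : (0:ℝ) ≤ 19497261025198080*(t - (9/2))^21 := mul_nonneg (by norm_num) (pow_nonneg hta 21)
  rcases le_total t ((19/4):ℝ) with hc | hc
  · have h' : ((1/4):ℝ) ≤ 5 - t := by linarith
    have hp : ((1/4398046511104):ℝ) ≤ (5 - t)^21 := by
      calc ((1/4398046511104):ℝ) = ((1/4):ℝ)^21 := by norm_num
        _ ≤ (5 - t)^21 := pow_le_pow_left₀ (by norm_num) h' 21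
    have h0' : (133346172879529344:ℝ)*((1/4398046511104):ℝ) ≤ 133346172879529344*(5 - t)^21 := mul_le_mul_of_nonneg_left hp (by norm_num)
    linarith [key, h0', hmm, hm1, hm2, hm3, hm4, hm5, hm6, hm7, hm8, hm9, hm10, hm11, hm12, hm13, hm14, hm15, hm16, hm17, hm18, hm19, hm20]
  · have h' : ((1/4):ℝ) ≤ t - (9/2) := by linarith
    have hp : ((1/4398046511104):ℝ) ≤ (t - (9/2))^21 := by
      calc ((1/4398046511104):ℝ) = ((1/4):ℝ)^21 := by norm_num
        _ ≤ (t - (9/2))^21 := pow_le_pow_left₀ (by norm_num) h' 21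
    have h0' : (19497261025198080:ℝ)*((1/4398046511104):ℝ) ≤ 19497261025198080*(t - (9/2))^21 := mul_le_mul_of_nonneg_left hp (by norm_num)
    linarith [key, h0', hm0, hm1, hm2, hm3, hm4, hm5, hm6, hm7, hm8, hm9, hm10, hm11, hm12, hm13, hm14, hm15, hm16, hm17, hm18, hm19, hm20]

lemma P14_pos_T {t : ℝ} (h1 : (5:ℝ) ≤ t) : 0 < P14 t := by
  have h : (0:ℝ) ≤ t - 5 := by linarith
  have key : P14 t = 9297018540 + 215405376438*(t - 5) + 1841488503511*(t - 5)^2 + 3989160946024*(t - 5)^3 + 4449311933952*(t - 5)^4 + 3137221916622*(t - 5)^5 + 1533982583149*(t - 5)^6 + 545381795232*(t - 5)^7 + 144240400016*(t - 5)^8 + 28537240474*(t - 5)^9 + 4182477213*(t - 5)^10 + 441739656*(t - 5)^11 + 31828788*(t - 5)^12 + 1401138*(t - 5)^13 + 28431*(t - 5)^14 := by unfold P14; ring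
  nlinarith [pow_nonneg h 2, pow_nonneg h 3, pow_nonneg h 4, pow_nonneg h 5, pow_nonneg h 6, pow_nonneg h 7, pow_nonneg h 8, pow_nonneg h 9, pow_nonneg h 10, pow_nonneg h 11, pow_nonneg h 12, pow_nonneg h 13, pow_nonneg h 14, h]


lemma P14_anti : StrictAntiOn P14 (Set.Icc (37/50:ℝ) (3/4)) := by
  apply strictAntiOn_of_deriv_neg (convex_Icc _ _) P14_cont.continuousOn
  intro x hx
  rw [interior_Icc] at hx
  rw [(hasDerivAt_P14 x).deriv]
  exact P14'_neg_B (le_of_lt hx.1) (le_of_lt hx.2)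

lemma P14_mono : StrictMonoOn P14 (Set.Icc (89/50:ℝ) (9/5)) := by
  apply strictMonoOn_of_deriv_pos (convex_Icc _ _) P14_cont.continuousOn
  intro x hx
  rw [interior_Icc] at hx
  rw [(hasDerivAt_P14 x).deriv]
  exact P14'_pos_D (le_of_lt hx.1) (le_of_lt hx.2)

lemma P14_pos_low {t : ℝ} (h : t ≤ (37/50:ℝ)) : 0 < P14 t := by
  rcases le_total t 0 with h0 | h0
  · exact P14_pos_neg t h0
  · exact P14_pos_A h0 h

lemma P14_pos_high {t : ℝ} (h : (9/5:ℝ) ≤ t) : 0 < P14 t := by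
  rcases le_total t 3 with h1 | h1
  · exact P14_pos_E h h1
  rcases le_total t 4 with h2 | h2
  · exact P14_pos_F h1 h2
  rcases le_total t (9/2) with h3 | h3
  · exact P14_pos_G h2 h3
  rcases le_total t 5 with h4 | h4
  · exact P14_pos_H h3 h4
  · exact P14_pos_T h4

/-- `P14` has exactly two real roots: one in `(0.74, 0.75)` and one in
`(1.78, 1.80)`. -/
theorem P14_two_real_roots :
    ∃ r₁ r₂ : ℝ, r₁ ∈ Set.Ioo (0.74 : ℝ) 0.75 ∧ r₂ ∈ Set.Ioo (1.78 : ℝ) 1.80 ∧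
      P14 r₁ = 0 ∧ P14 r₂ = 0 ∧ ∀ t : ℝ, P14 t = 0 → t = r₁ ∨ t = r₂ := by
  have e1 : (0.74:ℝ) = 37/50 := by norm_num
  have e2 : (0.75:ℝ) = 3/4 := by norm_num
  have e3 : (1.78:ℝ) = 89/50 := by norm_num
  have e4 : (1.80:ℝ) = 9/5 := by norm_num
  have hA : P14 (37/50) > 0 := P14_pos_low le_rfl
  have hB : P14 (3/4) < 0 := P14_neg_C le_rfl (by norm_num)
  have hC : P14 (89/50) < 0 := P14_neg_C (by norm_num) le_rfl
  have hD : P14 (9/5) > 0 := P14_pos_high le_rfl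
  have h1 : (0:ℝ) ∈ Set.Ioo (P14 (3/4)) (P14 (37/50)) := ⟨hB, hA⟩
  have h2 : (0:ℝ) ∈ Set.Ioo (P14 (89/50)) (P14 (9/5)) := ⟨hC, hD⟩
  obtain ⟨r₁, hr₁, hPr₁⟩ := intermediate_value_Ioo' (by norm_num : (37/50:ℝ) ≤ 3/4)
    P14_cont.continuousOn h1
  obtain ⟨r₂, hr₂, hPr₂⟩ := intermediate_value_Ioo (by norm_num : (89/50:ℝ) ≤ 9/5)
    P14_cont.continuousOn h2
  refine ⟨r₁, r₂, ?_, ?_, hPr₁, hPr₂, ?_⟩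
  · rw [e1, e2]; exact hr₁
  · rw [e3, e4]; exact hr₂
  · intro t ht
    rcases le_total t (37/50 : ℝ) with h | h
    · exact absurd ht (ne_of_gt (P14_pos_low h))
    rcases le_total t (3/4 : ℝ) with h' | h'
    · left
      have ht1 : t ∈ Set.Icc (37/50:ℝ) (3/4) := ⟨h, h'⟩
      have ht2 : r₁ ∈ Set.Icc (37/50:ℝ) (3/4) := ⟨le_of_lt hr₁.1, le_of_lt hr₁.2⟩
      exact P14_anti.injOn ht1 ht2 (by rw [ht, hPr₁])
    rcases le_total t (89/50 : ℝ) with h'' | h''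
    · exact absurd ht (ne_of_lt (P14_neg_C h' h''))
    rcases le_total t (9/5 : ℝ) with h3 | h3
    · right
      have ht1 : t ∈ Set.Icc (89/50:ℝ) (9/5) := ⟨h'', h3⟩
      have ht2 : r₂ ∈ Set.Icc (89/50:ℝ) (9/5) := ⟨le_of_lt hr₂.1, le_of_lt hr₂.2⟩
      exact P14_mono.injOn ht1 ht2 (by rw [ht, hPr₂])
    · exact absurd ht (ne_of_gt (P14_pos_high h3))
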